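/- If G and H are connected graphs with n(G) = n(H) ≥ 2 and f : V(G) → V(H) is a bijection, then γ_t(B(G,H,f)) ≤ a(B(G,H,f)) + 1, where B(G,H,f) is the bijection graph of G and H with respect to f. -/

import Mathlib

open SimpleGraph

/-- The total domination number of a graph. -/
noncomputable def totalDominationNumber {V : Type*} (G : SimpleGraph V) : ℕ :=
  sInf {k | ∃ D : Finset V, (∀ v : V, ∃ u ∈ D, G.Adj v u) ∧ D.card = k}

/-- The annihilation number of a graph. -/
noncomputable def annihilationNumber {V : Type*} (G : SimpleGraph V) : ℕ :=
  sSup {k | ∃ S : Finset V, S.card = k ∧ ∑ v ∈ S, (G.neighborSet v).ncard ≤ G.edgeSet.ncard}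

/-- The bijection graph `B(G, H, f)`: the disjoint union of `G` and `H` together with
the edges `u f(u)` for all vertices `u` of `G`. -/
def bijectionGraph {V W : Type*} (G : SimpleGraph V) (H : SimpleGraph W) (f : V → W) :
    SimpleGraph (V ⊕ W) :=
  SimpleGraph.fromRel (fun a b =>
    (∃ u v, G.Adj u v ∧ a = Sum.inl u ∧ b = Sum.inl v) ∨
    (∃ u v, H.Adj u v ∧ a = Sum.inr u ∧ b = Sum.inr v) ∨
    (∃ u, a = Sum.inl u ∧ b = Sum.inr (f u)))

/-- If `G` and `H` are connected graphs with `n(G) = n(H) ≥ 2` and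
`f : V(G) → V(H)` is a bijection, then `γₜ(B(G,H,f)) ≤ a(B(G,H,f)) + 1`. -/
theorem stmt_9 {V W : Type*} [Fintype V] [Fintype W]
    (G : SimpleGraph V) (H : SimpleGraph W) (f : V → W)
    (hG : G.Connected) (hH : H.Connected)
    (hf : Function.Bijective f)
    (hn : Fintype.card V = Fintype.card W) (hn2 : 2 ≤ Fintype.card V) :
    totalDominationNumber (bijectionGraph G H f) ≤
      annihilationNumber (bijectionGraph G H f) + 1 := by
  classical
  set B := bijectionGraph G H f with hB
  set n := Fintype.card V with hnV
  -- degree / ncard relations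
  have hdeg : ∀ v : V ⊕ W, (B.neighborSet v).ncard = B.degree v := by
    intro v
    rw [Set.ncard_eq_toFinset_card']
    simp [SimpleGraph.degree, SimpleGraph.neighborFinset_def]
  have hedge : B.edgeSet.ncard = B.edgeFinset.card := by
    rw [Set.ncard_eq_toFinset_card']
    exact congrArg Finset.card (by ext; simp)
  -- Step 1: total domination number ≤ n  (dominate by all left vertices)
  have hDL : (Finset.univ.image (Sum.inl : V → V ⊕ W)).card = n := by
    rw [Finset.card_image_of_injective _ Sum.inl_injective, Finset.card_univ]
  have hdomL : ∀ v : V ⊕ W, ∃ u ∈ Finset.univ.image (Sum.inl : V → V ⊕ W), B.Adj v u := by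
    intro v
    cases v with
    | inl x =>
      obtain ⟨y, hy⟩ : ∃ y, G.Adj x y := by
        obtain ⟨y, hxy⟩ := Fintype.exists_ne_of_one_lt_card (by omega) x
        obtain ⟨w⟩ := hG.preconnected x y
        cases w with
        | nil => exact absurd rfl hxy
        | cons h _ => exact ⟨_, h⟩
      refine ⟨Sum.inl y, Finset.mem_image_of_mem _ (Finset.mem_univ y), ?_⟩
      rw [hB, bijectionGraph, fromRel_adj]
      exact ⟨by simpa using hy.ne, Or.inl (Or.inl ⟨x, y, hy, rfl, rfl⟩)⟩
    | inr w =>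
      obtain ⟨x, hx⟩ := hf.2 w
      refine ⟨Sum.inl x, Finset.mem_image_of_mem _ (Finset.mem_univ x), ?_⟩
      rw [hB, bijectionGraph, fromRel_adj]
      exact ⟨by simp, Or.inr (Or.inr (Or.inr ⟨x, rfl, by rw [hx]⟩))⟩
  have h1 : totalDominationNumber B ≤ n :=
    Nat.sInf_le ⟨Finset.univ.image Sum.inl, hdomL, hDL⟩
  -- Step 2: n ≤ annihilation number
  have hsum : (∑ u : V, B.degree (Sum.inl u)) + ∑ w : W, B.degree (Sum.inr w)
      = 2 * B.edgeFinset.card := by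
    have h0 := SimpleGraph.sum_degrees_eq_twice_card_edges B
    rwa [Fintype.sum_sum_type] at h0
  have hmem : n ∈ {k | ∃ S : Finset (V ⊕ W), S.card = k ∧
      ∑ v ∈ S, (B.neighborSet v).ncard ≤ B.edgeSet.ncard} := by
    rcases le_or_gt (∑ u : V, B.degree (Sum.inl u)) (∑ w : W, B.degree (Sum.inr w)) with h | h
    · refine ⟨Finset.univ.image Sum.inl, hDL, ?_⟩
      rw [hedge, Finset.sum_image (fun _ _ _ _ h => Sum.inl_injective h)]
      simp only [hdeg]
      omega
    · refine ⟨Finset.univ.image Sum.inr, ?_, ?_⟩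
      · rw [Finset.card_image_of_injective _ Sum.inr_injective, Finset.card_univ]
        omega
      · rw [hedge, Finset.sum_image (fun _ _ _ _ h => Sum.inr_injective h)]
        simp only [hdeg]
        omega
  have hbdd : BddAbove {k | ∃ S : Finset (V ⊕ W), S.card = k ∧
      ∑ v ∈ S, (B.neighborSet v).ncard ≤ B.edgeSet.ncard} := by
    refine ⟨Fintype.card (V ⊕ W), ?_⟩
    rintro k ⟨S, rfl, -⟩
    exact Finset.card_le_univ S
  have h2 : n ≤ annihilationNumber B := le_csSup hbdd hmem
  calc totalDominationNumber B ≤ n := h1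
    _ ≤ annihilationNumber B := h2
    _ ≤ annihilationNumber B + 1 := Nat.le_succ _
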